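/- arXiv:1511.00803 — 2 statements merged into one kernel-verified Lean document; each statement's English description precedes it below -/
import Mathlib

section
/- Let q ≠ 2 be a prime power and let C be a linear code in F_q^n (an F_q-linear subspace of F_q^n) such that every codeword of C has even Hamming weight. Let c ∈ C be a codeword of weight two with support {i, j}, and let x ∈ C be an arbitrary codeword. Then there exists λ ∈ F_q such that (x_i, x_j) = (λ c_i, λ c_j). -/
open Finset

lemma norm_split {F : Type*} [Field F] [DecidableEq F] {n : ℕ} (i j : Fin n) (hij : i ≠ j)
    (v : Fin n → F) :
    hammingNorm v = (if v i ≠ 0 then 1 else 0) + (if v j ≠ 0 then 1 else 0) +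
      ∑ k ∈ (univ.erase i).erase j, (if v k ≠ 0 then 1 else 0) := by
  have : hammingNorm v = ∑ k, (if v k ≠ 0 then 1 else 0) := by
    simp [hammingNorm, Finset.card_filter]
  rw [this]
  have hjmem : j ∈ univ.erase i := by simp [hij.symm]
  have h1 : (univ : Finset (Fin n)) = insert i (insert j ((univ.erase i).erase j)) := by
    rw [Finset.insert_erase hjmem, Finset.insert_erase (Finset.mem_univ i)]
  have h2 : ∑ k, (if v k ≠ 0 then (1:ℕ) else 0)
      = ∑ k ∈ insert i (insert j ((univ.erase i).erase j)), (if v k ≠ 0 then 1 else 0) := by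
    rw [← h1]
  rw [h2, Finset.sum_insert (by simp [hij]), Finset.sum_insert (by simp)]
  ring

/-- In a linear code over `F_q`, `q ≠ 2`, all of whose codewords have even
Hamming weight, every codeword agrees on the support `{i, j}` of a weight-two codeword `c`
with a scalar multiple of `c`. -/
theorem weight_two_support_scalar {F : Type*} [Field F] [Fintype F] [DecidableEq F] {n : ℕ}
    (hq : Fintype.card F ≠ 2)
    (C : Submodule F (Fin n → F))
    (heven : ∀ v ∈ C, Even (hammingNorm v))
    (c : Fin n → F) (hc : c ∈ C) (hcw : hammingNorm c = 2)
    (i j : Fin n) (hij : i ≠ j) (hsupp : {k | c k ≠ 0} = {i, j})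
    (x : Fin n → F) (hx : x ∈ C) :
    ∃ l : F, x i = l * c i ∧ x j = l * c j := by
  have hci : c i ≠ 0 := by
    have : i ∈ ({k | c k ≠ 0} : Set (Fin n)) := by rw [hsupp]; left; rfl
    exact this
  have hcj : c j ≠ 0 := by
    have : j ∈ ({k | c k ≠ 0} : Set (Fin n)) := by rw [hsupp]; right; rfl
    exact this
  have hczero : ∀ k, k ≠ i → k ≠ j → c k = 0 := by
    intro k hki hkj
    by_contra h
    have : k ∈ ({i, j} : Set (Fin n)) := hsupp ▸ h
    rcases this with h | h <;> [exact hki h; exact hkj h]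
  -- card F ≥ 3
  have hcard : 3 ≤ Fintype.card F := by
    have h2 : 2 ≤ Fintype.card F := Fintype.one_lt_card
    omega
  have hexists : ∀ a b : F, ∃ μ : F, μ ≠ a ∧ μ ≠ b := by
    intro a b
    have : ({a, b} : Finset F).card < Fintype.card F := by
      calc ({a, b} : Finset F).card ≤ 2 := Finset.card_insert_le _ _ |>.trans (by simp)
        _ < Fintype.card F := by omega
    by_contra h
    push_neg at h
    have hsub : (univ : Finset F) ⊆ {a, b} := by
      intro μ _
      by_cases hμ : μ = a
      · simp [hμ]
      · simp [h μ hμ]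
    have := Finset.card_le_card hsub
    simp [Finset.card_univ] at this
    omega
  set l0 := x i / c i with hl0
  refine ⟨l0, by rw [hl0, div_mul_cancel₀ _ hci], ?_⟩
  by_contra hne
  set S := (univ.erase i).erase j with hS
  set N := ∑ k ∈ S, (if x k ≠ 0 then (1:ℕ) else 0) with hN
  -- all shifted words have the same outside sum N
  have houter : ∀ μ : F, ∑ k ∈ S, (if (x - μ • c) k ≠ 0 then (1:ℕ) else 0) = N := by
    intro μ
    apply Finset.sum_congr rfl
    intro k hk
    have hki : k ≠ i := Finset.ne_of_mem_erase (Finset.mem_of_mem_erase hk)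
    have hkj : k ≠ j := Finset.ne_of_mem_erase hk
    simp [hczero k hki hkj]
  have hwt : ∀ μ : F, hammingNorm (x - μ • c) =
      (if x i - μ * c i ≠ 0 then 1 else 0) + (if x j - μ * c j ≠ 0 then 1 else 0) + N := by
    intro μ
    rw [norm_split i j hij, houter μ]
    simp [Pi.sub_apply, Pi.smul_apply, smul_eq_mul]
  have hmem : ∀ μ : F, x - μ • c ∈ C := fun μ => C.sub_mem hx (C.smul_mem μ hc)
  -- evaluate at l0
  have hyi : x i - l0 * c i = 0 := by rw [hl0, div_mul_cancel₀ _ hci, sub_self]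
  have hyj : x j - l0 * c j ≠ 0 := fun h => hne (by linear_combination h)
  have hEy := heven _ (hmem l0)
  rw [hwt l0, if_neg (by simpa using hyi), if_pos hyj] at hEy
  have hEx := heven _ hx
  rw [show hammingNorm x = hammingNorm (x - (0:F) • c) by simp, hwt 0] at hEx
  simp only [zero_mul, sub_zero] at hEx
  obtain ⟨a, ha⟩ := hEy
  obtain ⟨b, hb⟩ := hEx
  -- parity: exactly one of x i, x j is nonzero
  have hparity : (x i ≠ 0 ∧ x j = 0) ∨ (x i = 0 ∧ x j ≠ 0) := by
    by_cases h1 : x i = 0 <;> by_cases h2 : x j = 0 <;>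
      simp [h1, h2] at ha hb ⊢ <;> omega
  rcases hparity with ⟨h1, h2⟩ | ⟨h1, h2⟩
  · -- pick μ ∉ {0, l0}
    obtain ⟨μ, hμ0, hml⟩ := hexists 0 l0
    have hz := heven _ (hmem μ)
    have hzi : x i - μ * c i ≠ 0 := by
      intro h
      apply hml
      rw [hl0, eq_div_iff hci]
      linear_combination -h
    have hzj : x j - μ * c j ≠ 0 := by
      rw [h2]; simpa using fun h => (mul_eq_zero.mp h).elim hμ0 hcj
    rw [hwt μ, if_pos hzi, if_pos hzj] at hz
    obtain ⟨d, hd⟩ := hz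
    simp [h1, h2] at hb
    omega
  · obtain ⟨μ, hμ0, hml⟩ := hexists 0 (x j / c j)
    have hz := heven _ (hmem μ)
    have hzi : x i - μ * c i ≠ 0 := by
      rw [h1]; simpa using fun h => (mul_eq_zero.mp h).elim hμ0 hci
    have hzj : x j - μ * c j ≠ 0 := by
      intro h
      apply hml
      field_simp
      linear_combination -h
    rw [hwt μ, if_pos hzi, if_pos hzj] at hz
    obtain ⟨d, hd⟩ := hz
    simp [h1, h2] at hb
    omega
end

section
/- Let C be a linear code over F_q with homogeneous weight enumerator W_C(x,y). The stabilizer of W_C(x,y) in GL_2(C) is finite if and only if the one-variable weight enumerator W_C(x) = W_C(x,1) has at least 3 distinct complex roots. -/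
open Finset

noncomputable def weightEnum (R : Type*) [CommRing R] {F : Type*} [Field F] [Fintype F]
    [DecidableEq F] {ι : Type*} [Fintype ι] (C : Submodule F (ι → F)) : Polynomial R :=
  ∑ c ∈ (Set.toFinite (C : Set (ι → F))).toFinset,
    Polynomial.X ^ (Fintype.card ι - hammingNorm c)

noncomputable def homWeightEnum (R : Type*) [CommRing R] {F : Type*} [Field F] [Fintype F]
    [DecidableEq F] {ι : Type*} [Fintype ι] (C : Submodule F (ι → F)) : MvPolynomial (Fin 2) R :=
  ∑ c ∈ (Set.toFinite (C : Set (ι → F))).toFinset,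
    MvPolynomial.X 0 ^ (Fintype.card ι - hammingNorm c) * MvPolynomial.X 1 ^ hammingNorm c

noncomputable def matAct (A : Matrix (Fin 2) (Fin 2) ℂ) (p : MvPolynomial (Fin 2) ℂ) :
    MvPolynomial (Fin 2) ℂ :=
  MvPolynomial.aeval
    (fun i => MvPolynomial.C (A i 0) * MvPolynomial.X 0 + MvPolynomial.C (A i 1) * MvPolynomial.X 1) p

noncomputable def toOneVar (p : MvPolynomial (Fin 2) ℂ) : Polynomial ℂ :=
  MvPolynomial.aeval ![Polynomial.X, 1] p

/-! ### Auxiliary lemmas -/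

namespace StabAux

lemma aeval_eq_eval' (u : Fin 2 → ℂ) (p : MvPolynomial (Fin 2) ℂ) :
    MvPolynomial.aeval u p = MvPolynomial.eval u p := by
  rw [← MvPolynomial.coe_aeval_eq_eval]; rfl

lemma matAct_one (p : MvPolynomial (Fin 2) ℂ) : matAct 1 p = p := by
  unfold matAct
  have h : (fun i : Fin 2 => MvPolynomial.C ((1 : Matrix (Fin 2) (Fin 2) ℂ) i 0) * MvPolynomial.X 0
      + MvPolynomial.C ((1:Matrix (Fin 2) (Fin 2) ℂ) i 1) * MvPolynomial.X 1)
      = fun i => (MvPolynomial.X i : MvPolynomial (Fin 2) ℂ) := by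
    funext i
    fin_cases i <;> simp [Matrix.one_apply]
  rw [h]
  simp [MvPolynomial.aeval_X_left]

lemma matAct_mul (A B : Matrix (Fin 2) (Fin 2) ℂ) (p : MvPolynomial (Fin 2) ℂ) :
    matAct A (matAct B p) = matAct (B * A) p := by
  unfold matAct
  rw [MvPolynomial.comp_aeval_apply]
  have h : (fun i : Fin 2 => (MvPolynomial.aeval fun i => MvPolynomial.C (A i 0) *
            (MvPolynomial.X 0 : MvPolynomial (Fin 2) ℂ) + MvPolynomial.C (A i 1) * MvPolynomial.X 1)
        (MvPolynomial.C (B i 0) * (MvPolynomial.X 0 : MvPolynomial (Fin 2) ℂ)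
          + MvPolynomial.C (B i 1) * MvPolynomial.X 1))
      = fun i => MvPolynomial.C ((B * A) i 0) * MvPolynomial.X 0
          + MvPolynomial.C ((B * A) i 1) * MvPolynomial.X 1 := by
    funext i
    simp [Matrix.mul_apply, Fin.sum_univ_two]
    ring
  exact congrArg (fun g => (MvPolynomial.aeval g :
    MvPolynomial (Fin 2) ℂ →ₐ[ℂ] MvPolynomial (Fin 2) ℂ) p) h

lemma eval_matAct (A : Matrix (Fin 2) (Fin 2) ℂ) (p : MvPolynomial (Fin 2) ℂ) (v : Fin 2 → ℂ) :
    MvPolynomial.eval v (matAct A p)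
      = MvPolynomial.eval (fun i => A i 0 * v 0 + A i 1 * v 1) p := by
  unfold matAct
  rw [← aeval_eq_eval', MvPolynomial.comp_aeval_apply, ← aeval_eq_eval']
  have h : (fun i : Fin 2 => (MvPolynomial.aeval v)
        (MvPolynomial.C (A i 0) * MvPolynomial.X 0 + MvPolynomial.C (A i 1) * MvPolynomial.X 1))
      = fun i => A i 0 * v 0 + A i 1 * v 1 := by
    funext i; simp
  exact congrArg (fun g => (MvPolynomial.aeval g : MvPolynomial (Fin 2) ℂ →ₐ[ℂ] ℂ) p) h

lemma matAct_linear (A : Matrix (Fin 2) (Fin 2) ℂ) (r : ℂ) :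
    matAct A (MvPolynomial.X 0 - MvPolynomial.C r * MvPolynomial.X 1)
      = MvPolynomial.C (A 0 0 - r * A 1 0) * MvPolynomial.X 0
        + MvPolynomial.C (A 0 1 - r * A 1 1) * MvPolynomial.X 1 := by
  simp only [matAct, map_sub, map_mul, MvPolynomial.aeval_X, MvPolynomial.aeval_C, map_add,
    MvPolynomial.algebraMap_eq]
  ring

lemma matAct_linear_eigen (A : Matrix (Fin 2) (Fin 2) ℂ) (r u : ℂ)
    (h1 : A 0 0 - r * A 1 0 = u) (h2 : A 0 1 - r * A 1 1 = -(r * u)) :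
    matAct A (MvPolynomial.X 0 - MvPolynomial.C r * MvPolynomial.X 1)
      = MvPolynomial.C u * (MvPolynomial.X 0 - MvPolynomial.C r * MvPolynomial.X 1) := by
  rw [matAct_linear, h1, h2, map_neg, map_mul]
  ring

section
variable {F : Type*} [Field F] [Fintype F] [DecidableEq F] {n : ℕ} (C : Submodule F (Fin n → F))

set_option linter.unusedSectionVars false

noncomputable def codeS : Finset (Fin n → F) := (Set.toFinite (C : Set (Fin n → F))).toFinset

lemma zero_mem_S : (0 : Fin n → F) ∈ codeS C := by
  simp [codeS, Set.Finite.mem_toFinset]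

lemma wt_le (c : Fin n → F) : hammingNorm c ≤ n := by
  simpa using hammingNorm_le_card_fintype (x := c)

lemma eval_W (v : Fin 2 → ℂ) : MvPolynomial.eval v (homWeightEnum ℂ C)
    = ∑ c ∈ codeS C, v 0 ^ (n - hammingNorm c) * v 1 ^ hammingNorm c := by
  simp [homWeightEnum, codeS]

lemma toOneVar_W : toOneVar (homWeightEnum ℂ C) = ∑ c ∈ codeS C, Polynomial.X ^ (n - hammingNorm c) := by
  simp [toOneVar, homWeightEnum, codeS]

lemma coeff_n : (toOneVar (homWeightEnum ℂ C)).coeff n = 1 := by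
  rw [toOneVar_W, ← Finset.add_sum_erase _ _ (zero_mem_S C)]
  simp only [hammingNorm_zero, Nat.sub_zero, Polynomial.coeff_add, Polynomial.coeff_X_pow,
    Polynomial.finset_sum_coeff]
  rw [if_pos trivial, Finset.sum_eq_zero, add_zero]
  intro c hc
  rcases Finset.mem_erase.mp hc with ⟨hc0, _⟩
  have h1 : 1 ≤ hammingNorm c := by
    rcases Nat.pos_of_ne_zero (fun h => hc0 (hammingNorm_eq_zero.mp h)) with h; omega
  have h2 : hammingNorm c ≤ n := wt_le c
  rw [if_neg (by omega)]

lemma natDegree_f : (toOneVar (homWeightEnum ℂ C)).natDegree = n := by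
  have hle : (toOneVar (homWeightEnum ℂ C)).natDegree ≤ n := by
    rw [toOneVar_W]
    apply Polynomial.natDegree_sum_le_of_forall_le
    intro c _
    simpa using Nat.sub_le n (hammingNorm c)
  have hge : n ≤ (toOneVar (homWeightEnum ℂ C)).natDegree := by
    apply Polynomial.le_natDegree_of_ne_zero
    rw [coeff_n]; norm_num
  omega

lemma monic_f : (toOneVar (homWeightEnum ℂ C)).Monic := by
  unfold Polynomial.Monic Polynomial.leadingCoeff
  rw [natDegree_f, coeff_n]

lemma card_roots_f : (toOneVar (homWeightEnum ℂ C)).roots.card = n := by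
  rw [(Polynomial.splits_iff_card_roots).mp (IsAlgClosed.splits _), natDegree_f]

lemma f_eq_prod : toOneVar (homWeightEnum ℂ C)
    = ((toOneVar (homWeightEnum ℂ C)).roots.map (fun a => Polynomial.X - Polynomial.C a)).prod :=
  (IsAlgClosed.splits _).eq_prod_roots_of_monic (monic_f C)

lemma eval_f (z : ℂ) : (toOneVar (homWeightEnum ℂ C)).eval z
    = ((toOneVar (homWeightEnum ℂ C)).roots.map (fun r => z - r)).prod := by
  conv_lhs => rw [f_eq_prod C]
  rw [Polynomial.eval_multiset_prod, Multiset.map_map]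
  simp

lemma eval_W_prod (v : Fin 2 → ℂ) : MvPolynomial.eval v (homWeightEnum ℂ C)
    = ((toOneVar (homWeightEnum ℂ C)).roots.map (fun r => v 0 - r * v 1)).prod := by
  rcases eq_or_ne (v 1) 0 with h0 | h0
  · rw [eval_W, ← Finset.add_sum_erase _ _ (zero_mem_S C)]
    have h : ∀ c ∈ (codeS C).erase 0, v 0 ^ (n - hammingNorm c) * v 1 ^ hammingNorm c = 0 := by
      intro c hc
      rcases Finset.mem_erase.mp hc with ⟨hc0, _⟩
      have h1 : hammingNorm c ≠ 0 := fun h => hc0 (hammingNorm_eq_zero.mp h)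
      rw [h0, zero_pow h1, mul_zero]
    rw [Finset.sum_eq_zero h, add_zero]
    have h2 : ((toOneVar (homWeightEnum ℂ C)).roots.map (fun r => v 0 - r * v 1))
        = ((toOneVar (homWeightEnum ℂ C)).roots.map (fun _ => v 0)) := by
      apply Multiset.map_congr rfl
      intro r _; rw [h0, mul_zero, sub_zero]
    rw [h2, Multiset.map_const', Multiset.prod_replicate, card_roots_f]
    simp
  · have key : ∀ r : ℂ, v 0 - r * v 1 = v 1 * (v 0 / v 1 - r) := by
      intro r; field_simp
    have h1 : ((toOneVar (homWeightEnum ℂ C)).roots.map (fun r => v 0 - r * v 1))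
        = ((toOneVar (homWeightEnum ℂ C)).roots.map (fun r => v 1 * (v 0 / v 1 - r))) :=
      Multiset.map_congr rfl (fun r _ => key r)
    rw [h1]
    have h2 : ((toOneVar (homWeightEnum ℂ C)).roots.map (fun r => v 1 * (v 0 / v 1 - r))).prod
        = v 1 ^ n * ((toOneVar (homWeightEnum ℂ C)).roots.map (fun r => v 0 / v 1 - r)).prod := by
      rw [show (fun r : ℂ => v 1 * (v 0 / v 1 - r)) = fun r => (fun _ => v 1) r * (fun r => v 0 / v 1 - r) r from rfl,
        Multiset.prod_map_mul, Multiset.map_const', Multiset.prod_replicate, card_roots_f]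
    rw [h2, ← eval_f, toOneVar_W]
    rw [Polynomial.eval_finset_sum, Finset.mul_sum, eval_W]
    apply Finset.sum_congr rfl
    intro c _
    have hw : hammingNorm c ≤ n := wt_le c
    simp only [Polynomial.eval_pow, Polynomial.eval_X]
    rw [div_pow]
    rw [show v 1 ^ n = v 1 ^ (n - hammingNorm c) * v 1 ^ hammingNorm c by
      rw [← pow_add]; congr 1; omega]
    field_simp

lemma W_eq_prod : homWeightEnum ℂ C = ((toOneVar (homWeightEnum ℂ C)).roots.map
    (fun r => MvPolynomial.X 0 - MvPolynomial.C r * MvPolynomial.X 1)).prod := by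
  apply MvPolynomial.funext
  intro v
  rw [eval_W_prod, map_multiset_prod, Multiset.map_map]
  congr 1
  apply Multiset.map_congr rfl
  intro r _
  simp

end

lemma matAct_pow (A : Matrix (Fin 2) (Fin 2) ℂ) (p : MvPolynomial (Fin 2) ℂ) (k : ℕ) :
    matAct A (p ^ k) = (matAct A p) ^ k := by
  unfold matAct; exact map_pow _ _ _

lemma matAct_mulp (A : Matrix (Fin 2) (Fin 2) ℂ) (p q : MvPolynomial (Fin 2) ℂ) :
    matAct A (p * q) = matAct A p * matAct A q := by
  unfold matAct; exact map_mul _ _ _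

lemma matAct_C1 (A : Matrix (Fin 2) (Fin 2) ℂ) :
    matAct A 1 = 1 := by
  unfold matAct; exact map_one _

lemma det_ne_zero' (A : GL (Fin 2) ℂ) : A.val.det ≠ 0 := by
  have h : IsUnit A.val := ⟨A, rfl⟩
  exact ((Matrix.isUnit_iff_isUnit_det _).mp h).ne_zero

/-! ### the matrices used to produce infinite stabilizers -/

noncomputable def M1 (r t : ℂ) : Matrix (Fin 2) (Fin 2) ℂ := !![1, r*(t-1); 0, t]

lemma M1_mul (r t t' : ℂ) : M1 r t * M1 r t' = M1 r (t*t') := by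
  ext i j
  fin_cases i <;> fin_cases j <;>
    simp [M1, Matrix.mul_apply, Fin.sum_univ_two] <;> ring

lemma M1_one (r : ℂ) : M1 r 1 = 1 := by
  ext i j
  fin_cases i <;> fin_cases j <;> simp [M1]

noncomputable def U1 (r t : ℂ) (h : t ≠ 0) : GL (Fin 2) ℂ :=
  ⟨M1 r t, M1 r t⁻¹, by rw [M1_mul, mul_inv_cancel₀ h, M1_one],
    by rw [M1_mul, inv_mul_cancel₀ h, M1_one]⟩

noncomputable def M2 (r s u v : ℂ) : Matrix (Fin 2) (Fin 2) ℂ :=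
  !![(u*s - r*v)/(s-r), r*s*(v-u)/(s-r); (u-v)/(s-r), (s*v-r*u)/(s-r)]

lemma M2_mul (r s u v u' v' : ℂ) (h : s ≠ r) :
    M2 r s u v * M2 r s u' v' = M2 r s (u*u') (v*v') := by
  have hsr : s - r ≠ 0 := sub_ne_zero.mpr h
  ext i j
  fin_cases i <;> fin_cases j <;>
    · simp only [M2, Matrix.mul_apply, Fin.sum_univ_two, Matrix.cons_val', Matrix.cons_val_zero,
        Matrix.cons_val_one, Matrix.head_cons, Matrix.empty_val', Matrix.cons_val_fin_one,
        Matrix.head_fin_const, Matrix.of_apply, Fin.zero_eta, Fin.mk_one]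
      field_simp
      ring

lemma M2_one (r s : ℂ) (h : s ≠ r) : M2 r s 1 1 = 1 := by
  have hsr : s - r ≠ 0 := sub_ne_zero.mpr h
  ext i j
  fin_cases i <;> fin_cases j <;>
    · simp only [M2, Matrix.cons_val', Matrix.cons_val_zero, Matrix.cons_val_one,
        Matrix.head_cons, Matrix.empty_val', Matrix.cons_val_fin_one, Matrix.head_fin_const,
        Matrix.one_apply, Matrix.of_apply, Fin.zero_eta, Fin.mk_one]
      try norm_num
      try field_simp
      try ring
      all_goals exact hsr

noncomputable def U2 (r s u v : ℂ) (h : s ≠ r) (hu : u ≠ 0) (hv : v ≠ 0) : GL (Fin 2) ℂ :=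
  ⟨M2 r s u v, M2 r s u⁻¹ v⁻¹,
    by rw [M2_mul _ _ _ _ _ _ h, mul_inv_cancel₀ hu, mul_inv_cancel₀ hv, M2_one _ _ h],
    by rw [M2_mul _ _ _ _ _ _ h, inv_mul_cancel₀ hu, inv_mul_cancel₀ hv, M2_one _ _ h]⟩

lemma M2_eigen_r1 (r s u v : ℂ) (h : s ≠ r) :
    M2 r s u v 0 0 - r * M2 r s u v 1 0 = u := by
  have hsr : s - r ≠ 0 := sub_ne_zero.mpr h
  simp only [M2, Matrix.cons_val', Matrix.cons_val_zero, Matrix.cons_val_one, Matrix.head_cons,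
    Matrix.empty_val', Matrix.cons_val_fin_one, Matrix.head_fin_const, Matrix.of_apply]
  field_simp
  ring

lemma M2_eigen_r2 (r s u v : ℂ) (h : s ≠ r) :
    M2 r s u v 0 1 - r * M2 r s u v 1 1 = -(r * u) := by
  have hsr : s - r ≠ 0 := sub_ne_zero.mpr h
  simp only [M2, Matrix.cons_val', Matrix.cons_val_zero, Matrix.cons_val_one, Matrix.head_cons,
    Matrix.empty_val', Matrix.cons_val_fin_one, Matrix.head_fin_const, Matrix.of_apply]
  field_simp
  ring

lemma M2_eigen_s1 (r s u v : ℂ) (h : s ≠ r) :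
    M2 r s u v 0 0 - s * M2 r s u v 1 0 = v := by
  have hsr : s - r ≠ 0 := sub_ne_zero.mpr h
  simp only [M2, Matrix.cons_val', Matrix.cons_val_zero, Matrix.cons_val_one, Matrix.head_cons,
    Matrix.empty_val', Matrix.cons_val_fin_one, Matrix.head_fin_const, Matrix.of_apply]
  field_simp
  ring

lemma M2_eigen_s2 (r s u v : ℂ) (h : s ≠ r) :
    M2 r s u v 0 1 - s * M2 r s u v 1 1 = -(s * v) := by
  have hsr : s - r ≠ 0 := sub_ne_zero.mpr h
  simp only [M2, Matrix.cons_val', Matrix.cons_val_zero, Matrix.cons_val_one, Matrix.head_cons,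
    Matrix.empty_val', Matrix.cons_val_fin_one, Matrix.head_fin_const, Matrix.of_apply]
  field_simp
  ring

/-! ### the evaluation function G and stabilizer facts -/

section
variable {F : Type*} [Field F] [Fintype F] [DecidableEq F] {n : ℕ} (C : Submodule F (Fin n → F))

set_option linter.unusedSectionVars false

noncomputable def Gf (p q : ℂ) : ℂ :=
  ((toOneVar (homWeightEnum ℂ C)).roots.map (fun r => p - r * q)).prod

lemma stab_G {A : Matrix (Fin 2) (Fin 2) ℂ}
    (hA : matAct A (homWeightEnum ℂ C) = homWeightEnum ℂ C) (x y : ℂ) :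
    Gf C (A 0 0 * x + A 0 1 * y) (A 1 0 * x + A 1 1 * y) = Gf C x y := by
  have h := congrArg (MvPolynomial.eval ![x, y]) hA
  rw [eval_matAct, eval_W_prod, eval_W_prod] at h
  unfold Gf
  simpa using h

lemma Gf_root {r : ℂ} (hr : r ∈ (toOneVar (homWeightEnum ℂ C)).roots) : Gf C r 1 = 0 := by
  unfold Gf
  apply Multiset.prod_eq_zero
  exact Multiset.mem_map.mpr ⟨r, hr, by ring⟩

lemma Gf_zero {p q : ℂ} (h : Gf C p q = 0) :
    ∃ r' ∈ (toOneVar (homWeightEnum ℂ C)).roots, p = r' * q := by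
  unfold Gf at h
  rw [Multiset.prod_eq_zero_iff] at h
  obtain ⟨r', hr', hval⟩ := Multiset.mem_map.mp h
  exact ⟨r', hr', by linear_combination hval⟩

lemma Gf_one_zero : Gf C 1 0 = 1 := by
  unfold Gf
  have h : ((toOneVar (homWeightEnum ℂ C)).roots.map (fun r : ℂ => 1 - r * 0))
      = ((toOneVar (homWeightEnum ℂ C)).roots.map (fun _ : ℂ => (1:ℂ))) :=
    Multiset.map_congr rfl (fun r _ => by ring)
  rw [h, Multiset.map_const', Multiset.prod_replicate, one_pow]

lemma Gf_smul (μ p q : ℂ) : Gf C (μ*p) (μ*q) = μ^n * Gf C p q := by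
  unfold Gf
  have h : ((toOneVar (homWeightEnum ℂ C)).roots.map (fun r : ℂ => μ*p - r * (μ*q)))
      = ((toOneVar (homWeightEnum ℂ C)).roots.map
          (fun r : ℂ => (fun _ : ℂ => μ) r * (fun r : ℂ => p - r * q) r)) :=
    Multiset.map_congr rfl (fun r _ => by ring)
  rw [h, Multiset.prod_map_mul, Multiset.map_const', Multiset.prod_replicate, card_roots_f]

noncomputable def rho (A : GL (Fin 2) ℂ) (r : ℂ) : ℂ :=
  (A.val 0 0 * r + A.val 0 1) / (A.val 1 0 * r + A.val 1 1)

lemma stab_root (A : GL (Fin 2) ℂ)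
    (hA : matAct A.val (homWeightEnum ℂ C) = homWeightEnum ℂ C)
    {r : ℂ} (hr : r ∈ (toOneVar (homWeightEnum ℂ C)).roots) :
    A.val 1 0 * r + A.val 1 1 ≠ 0 ∧ rho A r ∈ (toOneVar (homWeightEnum ℂ C)).roots := by
  have h0 : Gf C (A.val 0 0 * r + A.val 0 1 * 1) (A.val 1 0 * r + A.val 1 1 * 1) = Gf C r 1 := by
    have := stab_G C hA r 1
    simpa using this
  rw [Gf_root C hr] at h0
  simp only [mul_one] at h0
  obtain ⟨r', hr', heq⟩ := Gf_zero C h0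
  have hq : A.val 1 0 * r + A.val 1 1 ≠ 0 := by
    intro hq0
    rw [hq0, mul_zero] at heq
    have hdet := det_ne_zero' A
    rw [Matrix.det_fin_two] at hdet
    exact hdet (by linear_combination A.val 0 0 * hq0 - A.val 1 0 * heq)
  refine ⟨hq, ?_⟩
  have : rho A r = r' := by
    unfold rho
    rw [heq, mul_div_assoc, div_self hq, mul_one]
  rw [this]; exact hr'

lemma stab_scalar (A B : GL (Fin 2) ℂ)
    (hA : matAct A.val (homWeightEnum ℂ C) = homWeightEnum ℂ C)
    (hB : matAct B.val (homWeightEnum ℂ C) = homWeightEnum ℂ C)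
    {r1 r2 r3 : ℂ}
    (hm1 : r1 ∈ (toOneVar (homWeightEnum ℂ C)).roots)
    (hm2 : r2 ∈ (toOneVar (homWeightEnum ℂ C)).roots)
    (hm3 : r3 ∈ (toOneVar (homWeightEnum ℂ C)).roots)
    (h12 : r1 ≠ r2) (h13 : r1 ≠ r3) (h23 : r2 ≠ r3)
    (hρ1 : rho A r1 = rho B r1) (hρ2 : rho A r2 = rho B r2) (hρ3 : rho A r3 = rho B r3) :
    ∃ μ : ℂ, μ ^ n = 1 ∧ (A.val 1 0 * r1 + A.val 1 1) / (B.val 1 0 * r1 + B.val 1 1) = μ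
      ∧ A.val = μ • B.val := by
  obtain ⟨hqA1, -⟩ := stab_root C A hA hm1
  obtain ⟨hqA2, -⟩ := stab_root C A hA hm2
  obtain ⟨hqA3, -⟩ := stab_root C A hA hm3
  obtain ⟨hqB1, -⟩ := stab_root C B hB hm1
  obtain ⟨hqB2, -⟩ := stab_root C B hB hm2
  obtain ⟨hqB3, -⟩ := stab_root C B hB hm3
  set a00 := A.val 0 0; set a01 := A.val 0 1; set a10 := A.val 1 0; set a11 := A.val 1 1
  set b00 := B.val 0 0; set b01 := B.val 0 1; set b10 := B.val 1 0; set b11 := B.val 1 1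
  set μ1 := (a10 * r1 + a11) / (b10 * r1 + b11) with hμ1
  set μ2 := (a10 * r2 + a11) / (b10 * r2 + b11) with hμ2
  set μ3 := (a10 * r3 + a11) / (b10 * r3 + b11) with hμ3
  have hy1 : a10 * r1 + a11 = μ1 * (b10 * r1 + b11) := by
    rw [hμ1, div_mul_cancel₀ _ hqB1]
  have hy2 : a10 * r2 + a11 = μ2 * (b10 * r2 + b11) := by
    rw [hμ2, div_mul_cancel₀ _ hqB2]
  have hy3 : a10 * r3 + a11 = μ3 * (b10 * r3 + b11) := by
    rw [hμ3, div_mul_cancel₀ _ hqB3]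
  have cross1 : (a00 * r1 + a01) * (b10 * r1 + b11) = (b00 * r1 + b01) * (a10 * r1 + a11) := by
    have := hρ1; unfold rho at this
    replace this := (div_eq_div_iff hqA1 hqB1).mp this
    linear_combination this
  have cross2 : (a00 * r2 + a01) * (b10 * r2 + b11) = (b00 * r2 + b01) * (a10 * r2 + a11) := by
    have := hρ2; unfold rho at this
    replace this := (div_eq_div_iff hqA2 hqB2).mp this
    linear_combination this
  have cross3 : (a00 * r3 + a01) * (b10 * r3 + b11) = (b00 * r3 + b01) * (a10 * r3 + a11) := by
    have := hρ3; unfold rho at this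
    replace this := (div_eq_div_iff hqA3 hqB3).mp this
    linear_combination this
  have hx1 : a00 * r1 + a01 = μ1 * (b00 * r1 + b01) := by
    rw [hμ1, div_mul_eq_mul_div, eq_div_iff hqB1]
    linear_combination cross1
  have hx2 : a00 * r2 + a01 = μ2 * (b00 * r2 + b01) := by
    rw [hμ2, div_mul_eq_mul_div, eq_div_iff hqB2]
    linear_combination cross2
  have hx3 : a00 * r3 + a01 = μ3 * (b00 * r3 + b01) := by
    rw [hμ3, div_mul_eq_mul_div, eq_div_iff hqB3]
    linear_combination cross3
  have hdB : b00*b11 - b01*b10 ≠ 0 := by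
    have := det_ne_zero' B
    rwa [Matrix.det_fin_two] at this
  have k13 : (μ1 - μ3) * ((r3 - r2) * ((b00*b11 - b01*b10) * (r1 - r2))) = 0 := by
    linear_combination (b00*r2 + b01) * ((r3-r2) * hy1 + (r1-r3) * hy2 - (r1-r2) * hy3)
      - (b10*r2 + b11) * ((r3-r2) * hx1 + (r1-r3) * hx2 - (r1-r2) * hx3)
  have k23 : (μ2 - μ3) * ((r1 - r3) * ((b00*b11 - b01*b10) * (r2 - r1))) = 0 := by
    linear_combination (b00*r1 + b01) * ((r3-r2) * hy1 + (r1-r3) * hy2 - (r1-r2) * hy3)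
      - (b10*r1 + b11) * ((r3-r2) * hx1 + (r1-r3) * hx2 - (r1-r2) * hx3)
  have hne13 : (r3 - r2) * ((b00*b11 - b01*b10) * (r1 - r2)) ≠ 0 :=
    mul_ne_zero (sub_ne_zero.mpr (Ne.symm h23)) (mul_ne_zero hdB (sub_ne_zero.mpr h12))
  have hne23 : (r1 - r3) * ((b00*b11 - b01*b10) * (r2 - r1)) ≠ 0 :=
    mul_ne_zero (sub_ne_zero.mpr h13) (mul_ne_zero hdB (sub_ne_zero.mpr (Ne.symm h12)))
  have hm13 : μ1 = μ3 := by
    rcases mul_eq_zero.mp k13 with h | h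
    · exact sub_eq_zero.mp h
    · exact absurd h hne13
  have hm23 : μ2 = μ3 := by
    rcases mul_eq_zero.mp k23 with h | h
    · exact sub_eq_zero.mp h
    · exact absurd h hne23
  rw [hm23, ← hm13] at hx2 hy2
  have e00 : a00 = μ1 * b00 := by
    have h := mul_eq_zero.mp (show (a00 - μ1*b00) * (r1 - r2) = 0 by linear_combination hx1 - hx2)
    rcases h with h | h
    · linear_combination h
    · exact absurd h (sub_ne_zero.mpr h12)
  have e01 : a01 = μ1 * b01 := by linear_combination hx1 - r1 * e00
  have e10 : a10 = μ1 * b10 := by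
    have h := mul_eq_zero.mp (show (a10 - μ1*b10) * (r1 - r2) = 0 by linear_combination hy1 - hy2)
    rcases h with h | h
    · linear_combination h
    · exact absurd h (sub_ne_zero.mpr h12)
  have e11 : a11 = μ1 * b11 := by linear_combination hy1 - r1 * e10
  have hval : A.val = μ1 • B.val := by
    ext i j
    fin_cases i <;> fin_cases j <;>
      simp only [Matrix.smul_apply, smul_eq_mul]
    · exact e00
    · exact e01
    · exact e10
    · exact e11
  have hμn : μ1 ^ n = 1 := by
    have g1 : Gf C (a00 * 1 + a01 * 0) (a10 * 1 + a11 * 0) = Gf C 1 0 := stab_G C hA 1 0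
    have g2 : Gf C (b00 * 1 + b01 * 0) (b10 * 1 + b11 * 0) = Gf C 1 0 := stab_G C hB 1 0
    simp only [mul_one, mul_zero, add_zero] at g1 g2
    rw [e00, e10, Gf_smul, g2, Gf_one_zero] at g1
    simpa using g1
  exact ⟨μ1, hμn, rfl, hval⟩

end

end StabAux

open StabAux

/-- the stabilizer in `GL₂(ℂ)` of the homogeneous weight enumerator of a
linear code is finite iff the one-variable weight enumerator has at least three distinct
complex roots. -/
theorem stabilizer_finite_iff_three_roots {F : Type*} [Field F] [Fintype F] [DecidableEq F]
    {n : ℕ} (C : Submodule F (Fin n → F)) :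
    {A : GL (Fin 2) ℂ | matAct A.val (homWeightEnum ℂ C) = homWeightEnum ℂ C}.Finite ↔
      3 ≤ (toOneVar (homWeightEnum ℂ C)).roots.toFinset.card := by
  classical
  constructor
  · intro hfin
    by_contra hlt
    push_neg at hlt
    have hc : (toOneVar (homWeightEnum ℂ C)).roots.toFinset.card = 0
        ∨ (toOneVar (homWeightEnum ℂ C)).roots.toFinset.card = 1
        ∨ (toOneVar (homWeightEnum ℂ C)).roots.toFinset.card = 2 := by omega
    have hinf : {A : GL (Fin 2) ℂ |
        matAct A.val (homWeightEnum ℂ C) = homWeightEnum ℂ C}.Infinite := by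
      rcases hc with h0 | h1 | h2
      · have hroots : (toOneVar (homWeightEnum ℂ C)).roots = 0 :=
          Multiset.toFinset_eq_empty.mp (Finset.card_eq_zero.mp h0)
        have hW1 : homWeightEnum ℂ C = 1 := by
          rw [W_eq_prod C, hroots]; simp
        apply Set.infinite_of_injective_forall_mem
          (f := fun k : ℕ => U1 0 ((k+2 : ℕ) : ℂ) (Nat.cast_ne_zero.mpr (by omega)))
        · intro k1 k2 hk
          have h := congrArg (fun u : GL (Fin 2) ℂ => u.val 1 1) hk
          simp only [U1, M1] at h
          have h' := h
          simp only [Matrix.cons_val_one, Matrix.head_cons, Matrix.head_fin_const,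
            Matrix.cons_val', Matrix.cons_val_fin_one, Matrix.empty_val', Matrix.of_apply] at h'
          have : (k1 + 2 : ℕ) = (k2 + 2 : ℕ) := Nat.cast_injective h'
          omega
        · intro k
          show matAct _ _ = _
          rw [hW1, matAct_C1]
      · obtain ⟨r, hR⟩ := Finset.card_eq_one.mp h1
        obtain ⟨m, hWp⟩ : ∃ m : ℕ, homWeightEnum ℂ C
            = (MvPolynomial.X 0 - MvPolynomial.C r * MvPolynomial.X 1) ^ m := by
          refine ⟨(toOneVar (homWeightEnum ℂ C)).roots.count r, ?_⟩
          conv_lhs => rw [W_eq_prod C]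
          rw [Finset.prod_multiset_map_count, hR, Finset.prod_singleton]
        apply Set.infinite_of_injective_forall_mem
          (f := fun k : ℕ => U1 r ((k+2 : ℕ) : ℂ) (Nat.cast_ne_zero.mpr (by omega)))
        · intro k1 k2 hk
          have h := congrArg (fun u : GL (Fin 2) ℂ => u.val 1 1) hk
          simp only [U1, M1] at h
          have h' := h
          simp only [Matrix.cons_val_one, Matrix.head_cons, Matrix.head_fin_const,
            Matrix.cons_val', Matrix.cons_val_fin_one, Matrix.empty_val', Matrix.of_apply] at h'
          have : (k1 + 2 : ℕ) = (k2 + 2 : ℕ) := Nat.cast_injective h'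
          omega
        · intro k
          show matAct (M1 r ((k+2 : ℕ) : ℂ)) _ = _
          rw [hWp, matAct_pow]
          congr 1
          have heig := matAct_linear_eigen (M1 r ((k+2 : ℕ) : ℂ)) r 1
            (by simp [M1]) (by simp [M1]; ring)
          rwa [map_one, one_mul] at heig
      · obtain ⟨r, s, hrs, hR⟩ := Finset.card_eq_two.mp h2
        have hsmem : s ∈ (toOneVar (homWeightEnum ℂ C)).roots :=
          Multiset.mem_toFinset.mp (by rw [hR]; simp)
        have hb1 : 0 < (toOneVar (homWeightEnum ℂ C)).roots.count s :=
          Multiset.count_pos.mpr hsmem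
        set a := (toOneVar (homWeightEnum ℂ C)).roots.count r with ha
        set b := (toOneVar (homWeightEnum ℂ C)).roots.count s with hb
        have hWp : homWeightEnum ℂ C
            = (MvPolynomial.X 0 - MvPolynomial.C r * MvPolynomial.X 1) ^ a
              * (MvPolynomial.X 0 - MvPolynomial.C s * MvPolynomial.X 1) ^ b := by
          rw [W_eq_prod C, Finset.prod_multiset_map_count, hR,
            Finset.prod_insert (by simp [hrs]), Finset.prod_singleton]
        apply Set.infinite_of_injective_forall_mem
          (f := fun k : ℕ => U2 r s (((k+2 : ℕ) : ℂ)^b) ((((k+2 : ℕ) : ℂ)^a)⁻¹)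
            (Ne.symm hrs) (pow_ne_zero _ (Nat.cast_ne_zero.mpr (by omega)))
            (inv_ne_zero (pow_ne_zero _ (Nat.cast_ne_zero.mpr (by omega)))))
        · intro k1 k2 hk
          have h := congrArg (fun u : GL (Fin 2) ℂ => u.val 0 0 - r * u.val 1 0) hk
          have e1 := M2_eigen_r1 r s (((k1+2 : ℕ) : ℂ)^b) ((((k1+2 : ℕ) : ℂ)^a)⁻¹) (Ne.symm hrs)
          have e2 := M2_eigen_r1 r s (((k2+2 : ℕ) : ℂ)^b) ((((k2+2 : ℕ) : ℂ)^a)⁻¹) (Ne.symm hrs)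
          have h' : (((k1+2 : ℕ) : ℂ))^b = (((k2+2 : ℕ) : ℂ))^b := by
            rw [← e1, ← e2]; exact h
          have hnat : ((k1+2)^b : ℕ) = ((k2+2)^b : ℕ) := by exact_mod_cast h'
          have := Nat.pow_left_injective (by omega : b ≠ 0) hnat
          omega
        · intro k
          show matAct (M2 r s (((k+2 : ℕ) : ℂ)^b) ((((k+2 : ℕ) : ℂ)^a)⁻¹)) _ = _
          set t : ℂ := ((k+2 : ℕ) : ℂ) with hts
          have ht : t ≠ 0 := Nat.cast_ne_zero.mpr (by omega)
          rw [hWp, matAct_mulp, matAct_pow, matAct_pow]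
          rw [matAct_linear_eigen _ r (t^b) (M2_eigen_r1 r s _ _ (Ne.symm hrs))
            (M2_eigen_r2 r s _ _ (Ne.symm hrs))]
          rw [matAct_linear_eigen _ s ((t^a)⁻¹) (M2_eigen_s1 r s _ _ (Ne.symm hrs))
            (M2_eigen_s2 r s _ _ (Ne.symm hrs))]
          have hkey : (t^b)^a * ((t^a)⁻¹)^b = 1 := by
            rw [inv_pow, ← pow_mul, ← pow_mul, mul_comm b a]
            exact mul_inv_cancel₀ (pow_ne_zero _ ht)
          rw [mul_pow, mul_pow, ← map_pow, ← map_pow, mul_mul_mul_comm, ← map_mul, hkey,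
            map_one, one_mul]
    exact hinf hfin
  · intro h3
    have hn3 : 3 ≤ n :=
      le_trans (le_trans h3 (Multiset.toFinset_card_le _)) (le_of_eq (card_roots_f C))
    obtain ⟨r1, hr1⟩ := Finset.card_pos.mp
      (by omega : 0 < (toOneVar (homWeightEnum ℂ C)).roots.toFinset.card)
    have h2c : 0 < ((toOneVar (homWeightEnum ℂ C)).roots.toFinset.erase r1).card := by
      rw [Finset.card_erase_of_mem hr1]; omega
    obtain ⟨r2, hr2e⟩ := Finset.card_pos.mp h2c
    obtain ⟨hne21, hr2⟩ := Finset.mem_erase.mp hr2e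
    have h3c : 0 < (((toOneVar (homWeightEnum ℂ C)).roots.toFinset.erase r1).erase r2).card := by
      rw [Finset.card_erase_of_mem hr2e, Finset.card_erase_of_mem hr1]; omega
    obtain ⟨r3, hr3e⟩ := Finset.card_pos.mp h3c
    obtain ⟨hne32, hr3e'⟩ := Finset.mem_erase.mp hr3e
    obtain ⟨hne31, hr3⟩ := Finset.mem_erase.mp hr3e'
    have hm1 : r1 ∈ (toOneVar (homWeightEnum ℂ C)).roots := Multiset.mem_toFinset.mp hr1
    have hm2 : r2 ∈ (toOneVar (homWeightEnum ℂ C)).roots := Multiset.mem_toFinset.mp hr2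
    have hm3 : r3 ∈ (toOneVar (homWeightEnum ℂ C)).roots := Multiset.mem_toFinset.mp hr3
    have h12 : r1 ≠ r2 := hne21.symm
    have h13 : r1 ≠ r3 := hne31.symm
    have h23 : r2 ≠ r3 := hne32.symm
    set Rf := (toOneVar (homWeightEnum ℂ C)).roots.toFinset with hRf
    refine Set.Finite.subset (Set.Finite.biUnion
      (Finset.finite_toSet (Rf ×ˢ Rf ×ˢ Rf))
      (t := fun sv => {A : GL (Fin 2) ℂ |
        matAct A.val (homWeightEnum ℂ C) = homWeightEnum ℂ C
          ∧ (rho A r1, rho A r2, rho A r3) = sv})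
      (fun sv _ => ?_)) ?_
    case refine_2 =>
      intro A hA
      refine Set.mem_biUnion (x := ((rho A r1, rho A r2, rho A r3) : ℂ × ℂ × ℂ)) ?_ ⟨hA, rfl⟩
      simp only [Finset.coe_product, Set.mem_prod, Finset.mem_coe]
      exact ⟨Multiset.mem_toFinset.mpr (stab_root C A hA hm1).2,
        Multiset.mem_toFinset.mpr (stab_root C A hA hm2).2,
        Multiset.mem_toFinset.mpr (stab_root C A hA hm3).2⟩
    case refine_1 =>
      by_cases hne : ({A : GL (Fin 2) ℂ |
          matAct A.val (homWeightEnum ℂ C) = homWeightEnum ℂ C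
            ∧ (rho A r1, rho A r2, rho A r3) = sv}).Nonempty
      · obtain ⟨B, hBst, hBv⟩ := hne
        refine Set.Finite.of_finite_image (f := fun A : GL (Fin 2) ℂ =>
          (A.val 1 0 * r1 + A.val 1 1) / (B.val 1 0 * r1 + B.val 1 1)) ?_ ?_
        · refine Set.Finite.subset (Polynomial.finite_setOf_isRoot
            (p := Polynomial.X ^ n - Polynomial.C 1) (Polynomial.X_pow_sub_C_ne_zero (by omega) 1)) ?_
          rintro z ⟨A, ⟨hAst, hAv⟩, rfl⟩
          have hveq := hAv.trans hBv.symm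
          rw [Prod.mk.injEq, Prod.mk.injEq] at hveq
          obtain ⟨e1, e2, e3⟩ := hveq
          obtain ⟨μ, hμn, hμval, -⟩ := stab_scalar C A B hAst hBst hm1 hm2 hm3 h12 h13 h23 e1 e2 e3
          simp only [Set.mem_setOf_eq, Polynomial.IsRoot, Polynomial.eval_sub,
            Polynomial.eval_pow, Polynomial.eval_X, Polynomial.eval_C, Polynomial.eval_one]
          rw [hμval, hμn, sub_self]
        · rintro A1 ⟨hA1st, hA1v⟩ A2 ⟨hA2st, hA2v⟩ hff
          have hveq1 := hA1v.trans hBv.symm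
          rw [Prod.mk.injEq, Prod.mk.injEq] at hveq1
          obtain ⟨e1, e2, e3⟩ := hveq1
          obtain ⟨μa, -, hμval1, hsm1⟩ := stab_scalar C A1 B hA1st hBst hm1 hm2 hm3 h12 h13 h23 e1 e2 e3
          have hveq2 := hA2v.trans hBv.symm
          rw [Prod.mk.injEq, Prod.mk.injEq] at hveq2
          obtain ⟨e1', e2', e3'⟩ := hveq2
          obtain ⟨μb, -, hμval2, hsm2⟩ := stab_scalar C A2 B hA2st hBst hm1 hm2 hm3 h12 h13 h23 e1' e2' e3'
          have hff' : (A1.val 1 0 * r1 + A1.val 1 1) / (B.val 1 0 * r1 + B.val 1 1)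
              = (A2.val 1 0 * r1 + A2.val 1 1) / (B.val 1 0 * r1 + B.val 1 1) := hff
          rw [hμval1, hμval2] at hff'
          apply Units.ext
          rw [hsm1, hsm2, hff']
      · rw [Set.not_nonempty_iff_eq_empty] at hne
        show ({A : GL (Fin 2) ℂ |
          matAct A.val (homWeightEnum ℂ C) = homWeightEnum ℂ C
            ∧ (rho A r1, rho A r2, rho A r3) = sv}).Finite
        rw [hne]
        exact Set.finite_empty
end
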